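/- arXiv:1307.8305 — 6 statements merged into one kernel-verified Lean document; each statement's English description precedes it below -/
import Mathlib

section
/- The gap function ψ, considered as a function on the set R \ R* of non-optimal feasible points (with the subspace topology from ℝ^ℓ), is lower semi-continuous, and moreover ψ(α) > 0 for every α ∈ R \ R*. -/
open Matrix Filter Topology ENNReal

namespace SMO

noncomputable section

variable {l : ℕ}

/-- The dual SVM objective `f(α) = yᵀα − (1/2) αᵀKα`. -/
def obj (y : Fin l → ℝ) (K : Matrix (Fin l) (Fin l) ℝ) (α : Fin l → ℝ) : ℝ :=
  y ⬝ᵥ α - (1 / 2) * (α ⬝ᵥ (K *ᵥ α))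

/-- The gradient `∇f(α) = y − Kα`. -/
def grad (y : Fin l → ℝ) (K : Matrix (Fin l) (Fin l) ℝ) (α : Fin l → ℝ) : Fin l → ℝ :=
  y - K *ᵥ α

/-- The direction `v_B = e_i − e_j` of a working set `B = (i, j)`. -/
def dir (B : Fin l × Fin l) : Fin l → ℝ :=
  Pi.single B.1 1 - Pi.single B.2 1

/-- Lower bound `L_i = min {0, y_i C}`. -/
def lb (y : Fin l → ℝ) (C : ℝ) (i : Fin l) : ℝ := min 0 (y i * C)

/-- Upper bound `U_i = max {0, y_i C}`. -/
def ub (y : Fin l → ℝ) (C : ℝ) (i : Fin l) : ℝ := max 0 (y i * C)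

/-- The feasible region `R`. -/
def feas (y : Fin l → ℝ) (C : ℝ) : Set (Fin l → ℝ) :=
  {α | (∑ i, α i) = 0 ∧ ∀ i, lb y C i ≤ α i ∧ α i ≤ ub y C i}

/-- `I_up(α) = {i : α_i < U_i}`. -/
def Iup (y : Fin l → ℝ) (C : ℝ) (α : Fin l → ℝ) : Set (Fin l) := {i | α i < ub y C i}

/-- `I_down(α) = {i : α_i > L_i}`. -/
def Idown (y : Fin l → ℝ) (C : ℝ) (α : Fin l → ℝ) : Set (Fin l) := {i | lb y C i < α i}

/-- The set `B(α)` of working sets feasible at `α`. -/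
def wsets (y : Fin l → ℝ) (C : ℝ) (α : Fin l → ℝ) : Set (Fin l × Fin l) :=
  {B | B.1 ∈ Iup y C α ∧ B.2 ∈ Idown y C α ∧ B.1 ≠ B.2}

/-- The optimal value `f* = max {f(α) : α ∈ R}`. -/
def fstar (y : Fin l → ℝ) (K : Matrix (Fin l) (Fin l) ℝ) (C : ℝ) : ℝ :=
  sSup (obj y K '' feas y C)

/-- The optimal set `R* = {α ∈ R : f(α) = f*}`. -/
def opt (y : Fin l → ℝ) (K : Matrix (Fin l) (Fin l) ℝ) (C : ℝ) : Set (Fin l → ℝ) :=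
  {α ∈ feas y C | obj y K α = fstar y K C}

/-- The gap function `ψ(α) = max {v_Bᵀ ∇f(α) : B ∈ B(α)}`. -/
def psi (y : Fin l → ℝ) (K : Matrix (Fin l) (Fin l) ℝ) (C : ℝ) (α : Fin l → ℝ) : ℝ :=
  sSup ((fun B => dir B ⬝ᵥ grad y K α) '' wsets y C α)

/-- The Newton-step gain `g̃_B(α) = (v_Bᵀ∇f(α))² / (2 v_BᵀKv_B) ∈ [0, ∞]`, with the
conventions `g̃_B(α) = 0` if `v_BᵀKv_B = 0` and `v_Bᵀ∇f(α) = 0`, and `g̃_B(α) = ∞` if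
`v_BᵀKv_B = 0` and `v_Bᵀ∇f(α) ≠ 0`. -/
def ngain (y : Fin l → ℝ) (K : Matrix (Fin l) (Fin l) ℝ) (B : Fin l × Fin l)
    (α : Fin l → ℝ) : ℝ≥0∞ :=
  if dir B ⬝ᵥ (K *ᵥ dir B) = 0 then
    (if dir B ⬝ᵥ grad y K α = 0 then 0 else ⊤)
  else ENNReal.ofReal ((dir B ⬝ᵥ grad y K α) ^ 2 / (2 * (dir B ⬝ᵥ (K *ᵥ dir B))))

/-- A second-order working set selection: on every non-optimal feasible `α` it returns a
working set `W(α) = (i, j) ∈ B(α)` such that `i` maximizes `(∇f(α))_n` over `n ∈ I_up(α)`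
and `j` maximizes `g̃_{(i,n)}(α)` over `n ∈ I_down(α) \ {i}`. -/
def IsSecondOrderWSS (y : Fin l → ℝ) (K : Matrix (Fin l) (Fin l) ℝ) (C : ℝ)
    (W : (Fin l → ℝ) → Fin l × Fin l) : Prop :=
  ∀ α ∈ feas y C \ opt y K C,
    W α ∈ wsets y C α ∧
    (∀ n ∈ Iup y C α, grad y K α n ≤ grad y K α (W α).1) ∧
    (∀ n ∈ Idown y C α, n ≠ (W α).1 → ngain y K ((W α).1, n) α ≤ ngain y K (W α) α)


lemma dir_dot (i j : Fin l) (v : Fin l → ℝ) : dir (i, j) ⬝ᵥ v = v i - v j := by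
  simp [dir, dotProduct, Pi.single_apply, sub_mul, Finset.sum_sub_distrib, ite_mul]

lemma psi_bdd (y : Fin l → ℝ) (K : Matrix (Fin l) (Fin l) ℝ) (C : ℝ) (α : Fin l → ℝ) :
    BddAbove ((fun B => dir B ⬝ᵥ grad y K α) '' wsets y C α) :=
  ((Set.toFinite _).image _).bddAbove

lemma obj_concave (y : Fin l → ℝ) (K : Matrix (Fin l) (Fin l) ℝ) (hK : K.PosSemidef)
    (α β : Fin l → ℝ) : obj y K β ≤ obj y K α + grad y K α ⬝ᵥ (β - α) := by
  have hs : ∀ u v : Fin l → ℝ, u ⬝ᵥ (K *ᵥ v) = v ⬝ᵥ (K *ᵥ u) := by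
    intro u v
    have h : Kᵀ = K := (by simpa using hK.1 : K.IsSymm)
    rw [dotProduct_mulVec, ← mulVec_transpose, h, dotProduct_comm]
  have hpsd : (0:ℝ) ≤ (β - α) ⬝ᵥ (K *ᵥ (β - α)) := by simpa using hK.dotProduct_mulVec_nonneg (β - α)
  have key : (β - α) ⬝ᵥ (K *ᵥ (β - α))
      = β ⬝ᵥ (K *ᵥ β) - 2 * (β ⬝ᵥ (K *ᵥ α)) + α ⬝ᵥ (K *ᵥ α) := by
    rw [mulVec_sub, dotProduct_sub, sub_dotProduct, sub_dotProduct, hs α β]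
    ring
  have e1 : grad y K α ⬝ᵥ (β - α)
      = y ⬝ᵥ β - y ⬝ᵥ α - β ⬝ᵥ (K *ᵥ α) + α ⬝ᵥ (K *ᵥ α) := by
    rw [grad, sub_dotProduct, dotProduct_sub, dotProduct_sub,
      dotProduct_comm (K *ᵥ α) β, dotProduct_comm (K *ᵥ α) α]
    ring
  rw [obj, obj, e1]
  nlinarith [hpsd, key]

lemma exists_M (y : Fin l → ℝ) (K : Matrix (Fin l) (Fin l) ℝ) (C : ℝ) (α : Fin l → ℝ)
    (h : ∀ B ∈ wsets y C α, dir B ⬝ᵥ grad y K α ≤ 0) :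
    ∃ M : ℝ, (∀ i ∈ Iup y C α, grad y K α i ≤ M) ∧
      (∀ j ∈ Idown y C α, M ≤ grad y K α j) := by
  set G := grad y K α with hG
  have key : ∀ i ∈ Iup y C α, ∀ j ∈ Idown y C α, i ≠ j → G i ≤ G j := by
    intro i hi j hj hij
    have := h (i, j) ⟨hi, hj, hij⟩
    rw [dir_dot] at this
    linarith
  by_cases hk : ∃ k, k ∈ Iup y C α ∧ k ∈ Idown y C α
  · obtain ⟨k, hk1, hk2⟩ := hk
    refine ⟨G k, fun i hi => ?_, fun j hj => ?_⟩
    · by_cases h' : i = k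
      · exact h' ▸ le_refl _
      · exact key i hi k hk2 h'
    · by_cases h' : k = j
      · exact h' ▸ le_refl _
      · exact key k hk1 j hj h'
  · push_neg at hk
    have hdisj : ∀ i ∈ Iup y C α, ∀ j ∈ Idown y C α, G i ≤ G j := by
      intro i hi j hj
      by_cases h' : i = j
      · exact absurd (h' ▸ hj) (hk i hi)
      · exact key i hi j hj h'
    by_cases hup : (Iup y C α).Nonempty
    · refine ⟨sSup (G '' Iup y C α), fun i hi => ?_, fun j hj => ?_⟩
      · exact le_csSup (((Set.toFinite _).image _).bddAbove) ⟨i, hi, rfl⟩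
      · exact csSup_le (hup.image _) (by rintro _ ⟨i, hi, rfl⟩; exact hdisj i hi j hj)
    · rw [Set.not_nonempty_iff_eq_empty] at hup
      by_cases hdn : (Idown y C α).Nonempty
      · refine ⟨sInf (G '' Idown y C α), fun i hi => ?_, fun j hj => ?_⟩
        · simp [hup] at hi
        · exact csInf_le (((Set.toFinite _).image _).bddBelow) ⟨j, hj, rfl⟩
      · rw [Set.not_nonempty_iff_eq_empty] at hdn
        exact ⟨0, fun i hi => by simp [hup] at hi, fun j hj => by simp [hdn] at hj⟩

lemma mem_opt_of_nonpos (y : Fin l → ℝ) (K : Matrix (Fin l) (Fin l) ℝ) (hK : K.PosSemidef)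
    (C : ℝ) (α : Fin l → ℝ) (hα : α ∈ feas y C)
    (h : ∀ B ∈ wsets y C α, dir B ⬝ᵥ grad y K α ≤ 0) : α ∈ opt y K C := by
  obtain ⟨M, hM1, hM2⟩ := exists_M y K C α h
  have hub : ∀ β ∈ feas y C, obj y K β ≤ obj y K α := by
    intro β hβ
    have hsum : ∑ k, (β k - α k) = 0 := by
      rw [Finset.sum_sub_distrib, hα.1, hβ.1, sub_zero]
    have hgrad : grad y K α ⬝ᵥ (β - α) ≤ 0 := by
      have hterm : ∀ k ∈ Finset.univ, grad y K α k * (β k - α k) ≤ M * (β k - α k) := by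
        intro k _
        rcases lt_trichotomy (β k - α k) 0 with hlt | heq | hgt
        · have hkd : k ∈ Idown y C α := by
            have := (hβ.2 k).1
            simp only [Idown, Set.mem_setOf_eq]
            linarith
          exact mul_le_mul_of_nonpos_right (hM2 k hkd) (le_of_lt hlt)
        · rw [sub_eq_zero] at heq
          simp [heq]
        · have hku : k ∈ Iup y C α := by
            have := (hβ.2 k).2
            simp only [Iup, Set.mem_setOf_eq]
            linarith
          exact mul_le_mul_of_nonneg_right (hM1 k hku) (le_of_lt hgt)
      calc grad y K α ⬝ᵥ (β - α) = ∑ k, grad y K α k * (β k - α k) := rfl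
        _ ≤ ∑ k, M * (β k - α k) := Finset.sum_le_sum hterm
        _ = M * ∑ k, (β k - α k) := (Finset.mul_sum _ _ _).symm
        _ = 0 := by rw [hsum, mul_zero]
    have := obj_concave y K hK α β
    linarith
  refine ⟨hα, le_antisymm ?_ ?_⟩
  · exact le_csSup ⟨obj y K α, by rintro _ ⟨β, hβ, rfl⟩; exact hub β hβ⟩ ⟨α, hα, rfl⟩
  · exact csSup_le ⟨_, α, hα, rfl⟩ (by rintro _ ⟨β, hβ, rfl⟩; exact hub β hβ)

lemma psi_pos (y : Fin l → ℝ) (K : Matrix (Fin l) (Fin l) ℝ) (hK : K.PosSemidef)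
    (C : ℝ) (α : Fin l → ℝ) (hα : α ∈ feas y C \ opt y K C) : 0 < psi y K C α := by
  by_contra hc
  push_neg at hc
  exact hα.2 (mem_opt_of_nonpos y K hK C α hα.1 (fun B hB =>
    le_trans (le_csSup (psi_bdd y K C α) ⟨B, hB, rfl⟩) hc))

lemma wsets_nonempty (y : Fin l → ℝ) (K : Matrix (Fin l) (Fin l) ℝ) (hK : K.PosSemidef)
    (C : ℝ) (α : Fin l → ℝ) (hα : α ∈ feas y C \ opt y K C) :
    (wsets y C α).Nonempty := by
  rcases Set.eq_empty_or_nonempty (wsets y C α) with h | h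
  · have := psi_pos y K hK C α hα
    rw [psi, h, Set.image_empty, Real.sSup_empty] at this
    exact absurd this (lt_irrefl 0)
  · exact h

/-- The gap function `ψ`, considered as a function on the set `R \ R*` of
non-optimal feasible points (with the subspace topology), is lower semi-continuous, and
moreover `ψ(α) > 0` for every `α ∈ R \ R*`. -/
theorem psi_lowerSemicontinuousOn_and_pos
    (hl : 2 ≤ l) (y : Fin l → ℝ) (hy : ∀ i, y i = 1 ∨ y i = -1)
    (K : Matrix (Fin l) (Fin l) ℝ) (hK : K.PosSemidef) (C : ℝ) (hC : 0 < C) :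
    LowerSemicontinuousOn (psi y K C) (feas y C \ opt y K C) ∧
    ∀ α ∈ feas y C \ opt y K C, 0 < psi y K C α := by
  constructor
  · intro α hα t ht
    have hne : ((fun B => dir B ⬝ᵥ grad y K α) '' wsets y C α).Nonempty :=
      (wsets_nonempty y K hK C α hα).image _
    obtain ⟨x, ⟨B, hB, rfl⟩, hx⟩ := exists_lt_of_lt_csSup hne ht
    have hcont : Continuous (fun β : Fin l → ℝ => dir B ⬝ᵥ grad y K β) := by
      simp only [dotProduct, grad, Pi.sub_apply, mulVec]
      fun_prop
    have hev1 : ∀ᶠ β in 𝓝[feas y C \ opt y K C] α, t < dir B ⬝ᵥ grad y K β :=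
      (((hcont.tendsto α).eventually (eventually_gt_nhds hx)).filter_mono nhdsWithin_le_nhds)
    have hopen : IsOpen {β : Fin l → ℝ | β B.1 < ub y C B.1 ∧ lb y C B.2 < β B.2} :=
      (isOpen_lt (continuous_apply B.1) continuous_const).inter
        (isOpen_lt continuous_const (continuous_apply B.2))
    have hmem : α ∈ {β : Fin l → ℝ | β B.1 < ub y C B.1 ∧ lb y C B.2 < β B.2} :=
      ⟨hB.1, hB.2.1⟩
    have hev2 : ∀ᶠ β in 𝓝[feas y C \ opt y K C] α, B ∈ wsets y C β := by
      filter_upwards [(hopen.eventually_mem hmem).filter_mono nhdsWithin_le_nhds] with β hβ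
      exact ⟨hβ.1, hβ.2, hB.2.2⟩
    filter_upwards [hev1, hev2] with β h1 h2
    exact lt_of_lt_of_le h1 (le_csSup (psi_bdd y K C β) ⟨B, h2, rfl⟩)
  · exact fun α hα => psi_pos y K hK C α hα


end

end SMO
end

section
/- Let α ∈ R be a feasible point with B(α) ≠ ∅. Then α is optimal (α ∈ R*) if and only if ψ(α) ≤ 0. Equivalently, the exact KKT stopping condition max{(∇f(α))_i : i ∈ I_up(α)} − min{(∇f(α))_j : j ∈ I_down(α)} ≤ 0 holds if and only if α maximizes f over R. -/
open Matrix Filter Topology ENNReal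

namespace SMO

noncomputable section

variable {l : ℕ}

lemma dir_dot_s1 (B : Fin l × Fin l) (g : Fin l → ℝ) :
    dir B ⬝ᵥ g = g B.1 - g B.2 := by
  simp [dir, sub_dotProduct, single_dotProduct]

lemma dot_symm {K : Matrix (Fin l) (Fin l) ℝ} (hK : K.IsHermitian) (u v : Fin l → ℝ) :
    u ⬝ᵥ (K *ᵥ v) = v ⬝ᵥ (K *ᵥ u) := by
  simp only [dotProduct, mulVec, Finset.mul_sum]
  rw [Finset.sum_comm]
  refine Finset.sum_congr rfl fun i _ => Finset.sum_congr rfl fun j _ => ?_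
  have h : K j i = K i j := by
    have := congrFun (congrFun hK i) j
    simpa [Matrix.conjTranspose_apply] using this
  rw [h]; ring

lemma obj_taylor {K : Matrix (Fin l) (Fin l) ℝ} (hK : K.IsHermitian)
    (y α β : Fin l → ℝ) :
    obj y K β = obj y K α + grad y K α ⬝ᵥ (β - α)
      - (1 / 2) * ((β - α) ⬝ᵥ (K *ᵥ (β - α))) := by
  have h := dot_symm hK α β
  simp only [obj, grad, sub_dotProduct, dotProduct_sub, mulVec_sub]
  have h2 : (K *ᵥ α) ⬝ᵥ β = β ⬝ᵥ (K *ᵥ α) := dotProduct_comm _ _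
  have h3 : (K *ᵥ α) ⬝ᵥ α = α ⬝ᵥ (K *ᵥ α) := dotProduct_comm _ _
  linarith

lemma sum_eq_zero_of_feas {y : Fin l → ℝ} {C : ℝ} {α : Fin l → ℝ}
    (hα : α ∈ feas y C) : ∑ i, α i = 0 := hα.1

/-- concavity-based sufficiency -/
lemma suff {y : Fin l → ℝ} {K : Matrix (Fin l) (Fin l) ℝ} {C : ℝ} {α : Fin l → ℝ}
    (hK : K.PosSemidef) (hα : α ∈ feas y C) (hup : (Iup y C α).Nonempty)
    (hP : ∀ i ∈ Iup y C α, ∀ j ∈ Idown y C α, grad y K α i ≤ grad y K α j) :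
    ∀ β ∈ feas y C, obj y K β ≤ obj y K α := by
  intro β hβ
  set g := grad y K α with hg
  set b := sSup (g '' Iup y C α) with hb
  have hbdd : BddAbove (g '' Iup y C α) := ((Set.toFinite _).image g).bddAbove
  have hquad : 0 ≤ (β - α) ⬝ᵥ (K *ᵥ (β - α)) := by
    have := hK.dotProduct_mulVec_nonneg (β - α); simpa using this
  have hsum : ∑ i, (β i - α i) = 0 := by
    rw [Finset.sum_sub_distrib, hβ.1, hα.1]; ring
  have hdot : g ⬝ᵥ (β - α) = ∑ i, (g i - b) * (β i - α i) := by
    simp only [dotProduct, Pi.sub_apply, sub_mul]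
    rw [Finset.sum_sub_distrib, ← Finset.mul_sum, hsum, mul_zero, sub_zero]
  have hterm : ∀ i : Fin l, (g i - b) * (β i - α i) ≤ 0 := by
    intro i
    rcases lt_trichotomy (β i - α i) 0 with h | h | h
    · -- i ∈ Idown
      have hiD : i ∈ Idown y C α := by
        have := (hβ.2 i).1
        simp only [Idown, Set.mem_setOf_eq]; linarith
      have hble : b ≤ g i := by
        apply csSup_le (hup.image g)
        rintro x ⟨k, hk, rfl⟩
        exact hP k hk i hiD
      exact mul_nonpos_of_nonneg_of_nonpos (by linarith) (by linarith)
    · rw [h, mul_zero]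
    · -- i ∈ Iup
      have hiU : i ∈ Iup y C α := by
        have := (hβ.2 i).2
        simp only [Iup, Set.mem_setOf_eq]; linarith
      have hgle : g i ≤ b := le_csSup hbdd ⟨i, hiU, rfl⟩
      exact mul_nonpos_of_nonpos_of_nonneg (by linarith) (by linarith)
  have hglin : g ⬝ᵥ (β - α) ≤ 0 := by
    rw [hdot]; exact Finset.sum_nonpos fun i _ => hterm i
  have := obj_taylor hK.1 y α β
  linarith

/-- necessity: if the KKT pair condition fails, a strictly better feasible point exists -/
lemma nec {y : Fin l → ℝ} {K : Matrix (Fin l) (Fin l) ℝ} {C : ℝ} {α : Fin l → ℝ}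
    (hK : K.PosSemidef) (hα : α ∈ feas y C)
    {i j : Fin l} (hi : i ∈ Iup y C α) (hj : j ∈ Idown y C α)
    (hgt : grad y K α j < grad y K α i) :
    ∃ β ∈ feas y C, obj y K α < obj y K β := by
  set g := grad y K α with hgdef
  have hij : i ≠ j := by rintro rfl; exact lt_irrefl _ hgt
  set v : Fin l → ℝ := dir (i, j) with hv
  set s : ℝ := g i - g j with hs
  have hs0 : 0 < s := by simp [hs]; linarith
  set q : ℝ := v ⬝ᵥ (K *ᵥ v) with hq
  have hq0 : 0 ≤ q := by
    have := hK.dotProduct_mulVec_nonneg v; simpa [hq] using this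
  set t : ℝ := min (ub y C i - α i) (min (α j - lb y C j) (s / (q + 1))) with ht
  have ht0 : 0 < t := by
    apply lt_min
    · simpa [sub_pos, Iup] using hi
    · apply lt_min
      · simpa [sub_pos, Idown] using hj
      · positivity
  have ht1 : t ≤ ub y C i - α i := min_le_left _ _
  have ht2 : t ≤ α j - lb y C j := le_trans (min_le_right _ _) (min_le_left _ _)
  have ht3 : t ≤ s / (q + 1) := le_trans (min_le_right _ _) (min_le_right _ _)
  refine ⟨α + t • v, ⟨?_, ?_⟩, ?_⟩
  · -- sum is zero
    have hvsum : ∑ k, v k = 0 := by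
      simp [hv, dir, Finset.sum_sub_distrib, Finset.sum_pi_single']
    simp only [Pi.add_apply, Pi.smul_apply, smul_eq_mul]
    rw [Finset.sum_add_distrib, hα.1, ← Finset.mul_sum, hvsum, mul_zero, add_zero]
  · -- bounds
    intro k
    have hvk : v k = (if k = i then (1:ℝ) else 0) - (if k = j then (1:ℝ) else 0) := by
      simp [hv, dir, Pi.single_apply, eq_comm]
    by_cases hki : k = i
    · subst hki
      have : v k = 1 := by simp [hvk, hij]
      simp only [Pi.add_apply, Pi.smul_apply, smul_eq_mul, this, mul_one]
      refine ⟨le_trans (hα.2 k).1 (by linarith), by linarith⟩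
    · by_cases hkj : k = j
      · subst hkj
        have : v k = -1 := by simp [hvk, hki]
        simp only [Pi.add_apply, Pi.smul_apply, smul_eq_mul, this, mul_neg_one]
        refine ⟨by linarith, le_trans (by linarith) (hα.2 k).2⟩
      · have : v k = 0 := by simp [hvk, hki, hkj]
        simp only [Pi.add_apply, Pi.smul_apply, smul_eq_mul, this, mul_zero, add_zero]
        exact hα.2 k
  · -- strict increase
    have hβα : (α + t • v) - α = t • v := by ring_nf
    have htay := obj_taylor hK.1 y α (α + t • v)
    rw [hβα] at htay
    have h1 : g ⬝ᵥ (t • v) = t * s := by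
      rw [dotProduct_smul]
      have : g ⬝ᵥ v = s := by
        rw [dotProduct_comm, hv, dir_dot_s1]
      rw [this, smul_eq_mul]
    have h2 : (t • v) ⬝ᵥ (K *ᵥ (t • v)) = t ^ 2 * q := by
      rw [smul_dotProduct, mulVec_smul, dotProduct_smul]
      simp [hq]; ring
    rw [h1, h2] at htay
    have hts : t * (q + 1) ≤ s := by
      rw [← le_div_iff₀ (by positivity)]; exact ht3
    have hgain : 0 < t * s - 1 / 2 * (t ^ 2 * q) := by
      nlinarith [mul_pos ht0 hs0, mul_pos ht0 ht0, mul_nonneg (mul_nonneg ht0.le ht0.le) hq0]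
    linarith

lemma bddAbove_obj {y : Fin l → ℝ} {K : Matrix (Fin l) (Fin l) ℝ} {C : ℝ}
    (hy : ∀ i, y i = 1 ∨ y i = -1) (hK : K.PosSemidef) (hC : 0 < C) :
    BddAbove (obj y K '' feas y C) := by
  refine ⟨∑ _i : Fin l, C, ?_⟩
  rintro x ⟨β, hβ, rfl⟩
  have habs : ∀ i, |β i| ≤ C := by
    intro i
    have h1 := (hβ.2 i).1
    have h2 := (hβ.2 i).2
    have hyC : |y i * C| = C := by
      rcases hy i with h | h <;> rw [h] <;> simp [abs_of_pos hC]
    have hn := neg_abs_le (y i * C)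
    have hp := le_abs_self (y i * C)
    rw [hyC] at hn hp
    have hlb : -C ≤ lb y C i := le_min (by linarith) hn
    have hub : ub y C i ≤ C := max_le hC.le hp
    rw [abs_le]; exact ⟨le_trans hlb h1, le_trans h2 hub⟩
  have hquad : 0 ≤ β ⬝ᵥ (K *ᵥ β) := by have := hK.dotProduct_mulVec_nonneg β; simpa using this
  have hlin : y ⬝ᵥ β ≤ ∑ _i : Fin l, C := by
    rw [dotProduct]
    apply Finset.sum_le_sum
    intro i _
    calc y i * β i ≤ |y i * β i| := le_abs_self _
      _ = |β i| := by rcases hy i with h | h <;> simp [h, abs_mul]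
      _ ≤ C := habs i
  simp only [obj]
  linarith

lemma opt_iff {y : Fin l → ℝ} {K : Matrix (Fin l) (Fin l) ℝ} {C : ℝ} {α : Fin l → ℝ}
    (hy : ∀ i, y i = 1 ∨ y i = -1) (hK : K.PosSemidef) (hC : 0 < C)
    (hα : α ∈ feas y C) :
    α ∈ opt y K C ↔ ∀ β ∈ feas y C, obj y K β ≤ obj y K α := by
  simp only [opt, Set.mem_setOf_eq]
  constructor
  · rintro ⟨-, hopt⟩ β hβ
    rw [hopt]
    exact le_csSup (bddAbove_obj hy hK hC) ⟨β, hβ, rfl⟩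
  · intro h
    refine ⟨hα, ?_⟩
    have hgreat : IsGreatest (obj y K '' feas y C) (obj y K α) :=
      ⟨⟨α, hα, rfl⟩, by rintro x ⟨β, hβ, rfl⟩; exact h β hβ⟩
    exact hgreat.csSup_eq.symm

/-- For feasible `α` with `B(α) ≠ ∅`: `α` is optimal iff `ψ(α) ≤ 0`;
equivalently the exact KKT stopping condition
`max {(∇f(α))_i : i ∈ I_up(α)} − min {(∇f(α))_j : j ∈ I_down(α)} ≤ 0`
holds iff `α` maximizes `f` over `R`. -/
theorem optimal_iff_gap_nonpos
    (hl : 2 ≤ l) (y : Fin l → ℝ) (hy : ∀ i, y i = 1 ∨ y i = -1)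
    (K : Matrix (Fin l) (Fin l) ℝ) (hK : K.PosSemidef) (C : ℝ) (hC : 0 < C)
    (α : Fin l → ℝ) (hα : α ∈ feas y C) (hB : (wsets y C α).Nonempty) :
    (α ∈ opt y K C ↔ psi y K C α ≤ 0) ∧
    (sSup (grad y K α '' Iup y C α) - sInf (grad y K α '' Idown y C α) ≤ 0 ↔
      ∀ β ∈ feas y C, obj y K β ≤ obj y K α) := by
  obtain ⟨B0, hB01, hB02, hB0ne⟩ := id hB
  have hup : (Iup y C α).Nonempty := ⟨B0.1, hB01⟩
  have hdown : (Idown y C α).Nonempty := ⟨B0.2, hB02⟩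
  set g := grad y K α with hg
  -- the pairwise KKT condition
  have hPiff : ∀ (P : Prop),
      ((∀ i ∈ Iup y C α, ∀ j ∈ Idown y C α, g i ≤ g j) ↔ P) → True := fun _ _ => trivial
  have hmax : (∀ β ∈ feas y C, obj y K β ≤ obj y K α) ↔
      (∀ i ∈ Iup y C α, ∀ j ∈ Idown y C α, g i ≤ g j) := by
    constructor
    · intro h i hi j hj
      by_contra hlt
      push_neg at hlt
      obtain ⟨β, hβ, hβgt⟩ := nec hK hα hi hj hlt
      exact absurd (h β hβ) (not_le.mpr hβgt)
    · intro hP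
      exact suff hK hα hup hP
  have hpsi : psi y K C α ≤ 0 ↔
      (∀ i ∈ Iup y C α, ∀ j ∈ Idown y C α, g i ≤ g j) := by
    rw [psi, csSup_le_iff (((Set.toFinite _).image _).bddAbove)
      (hB.image _)]
    constructor
    · rintro h i hi j hj
      by_cases hij : i = j
      · exact hij ▸ le_refl _
      · have h2 : dir (i, j) ⬝ᵥ grad y K α ≤ 0 := h _ ⟨(i, j), ⟨hi, hj, hij⟩, rfl⟩
        rw [dir_dot_s1] at h2
        simpa [sub_nonpos] using h2
    · rintro h x ⟨B, ⟨h1, h2, h3⟩, rfl⟩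
      show dir B ⬝ᵥ grad y K α ≤ 0
      rw [dir_dot_s1]
      have := h B.1 h1 B.2 h2
      linarith
  have hMm : sSup (g '' Iup y C α) - sInf (g '' Idown y C α) ≤ 0 ↔
      (∀ i ∈ Iup y C α, ∀ j ∈ Idown y C α, g i ≤ g j) := by
    rw [sub_nonpos]
    constructor
    · intro h i hi j hj
      calc g i ≤ sSup (g '' Iup y C α) :=
            le_csSup (((Set.toFinite _).image g).bddAbove) ⟨i, hi, rfl⟩
        _ ≤ sInf (g '' Idown y C α) := h
        _ ≤ g j := csInf_le (((Set.toFinite _).image g).bddBelow) ⟨j, hj, rfl⟩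
    · intro h
      apply csSup_le (hup.image g)
      rintro x ⟨i, hi, rfl⟩
      apply le_csInf (hdown.image g)
      rintro z ⟨j, hj, rfl⟩
      exact h i hi j hj
  constructor
  · rw [opt_iff hy hK hC hα, hpsi, hmax]
  · rw [hMm, hmax]

end

end SMO
end

section
/- Let W be a second-order working set selection. Then for every α ∈ R \ R* one has v_{W(α)}ᵀ∇f(α) ≠ 0. In particular, if moreover v_{W(α)} lies in the kernel of K (i.e., K v_{W(α)} = 0), then g̃_W(α) = ∞. -/
open Matrix Filter Topology ENNReal

namespace SMO

noncomputable section

variable {l : ℕ}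

lemma dir_dotProduct {l : ℕ} (B : Fin l × Fin l) (v : Fin l → ℝ) :
    dir B ⬝ᵥ v = v B.1 - v B.2 := by
  simp [dir, sub_dotProduct, single_dotProduct]

lemma mulVec_symm_dot {l : ℕ} {K : Matrix (Fin l) (Fin l) ℝ} (hK : Kᵀ = K)
    (u v : Fin l → ℝ) : u ⬝ᵥ (K *ᵥ v) = v ⬝ᵥ (K *ᵥ u) := by
  rw [Matrix.dotProduct_mulVec, ← Matrix.mulVec_transpose, hK, dotProduct_comm]

lemma obj_le_linearization {l : ℕ} (y : Fin l → ℝ) (K : Matrix (Fin l) (Fin l) ℝ)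
    (hK : K.PosSemidef) (α β : Fin l → ℝ) :
    obj y K β ≤ obj y K α + grad y K α ⬝ᵥ (β - α) := by
  have hsymm : Kᵀ = K := by have h := (by simpa using hK.1 : K.IsSymm); exact h
  set d : Fin l → ℝ := β - α with hd
  have hβ : β = α + d := by rw [hd]; ring
  have hpsd : 0 ≤ d ⬝ᵥ (K *ᵥ d) := hK.dotProduct_mulVec_nonneg d
  have h1 : α ⬝ᵥ (K *ᵥ d) = d ⬝ᵥ (K *ᵥ α) := mulVec_symm_dot hsymm _ _
  have e1 : y ⬝ᵥ β = y ⬝ᵥ α + y ⬝ᵥ d := by rw [hβ, dotProduct_add]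
  have e2 : β ⬝ᵥ (K *ᵥ β) = α ⬝ᵥ (K *ᵥ α) + 2 * (d ⬝ᵥ (K *ᵥ α)) + d ⬝ᵥ (K *ᵥ d) := by
    rw [hβ, Matrix.mulVec_add, dotProduct_add, add_dotProduct,
      add_dotProduct, h1]
    ring
  have e3 : grad y K α ⬝ᵥ d = y ⬝ᵥ d - d ⬝ᵥ (K *ᵥ α) := by
    rw [grad, sub_dotProduct, dotProduct_comm (K *ᵥ α) d]
  rw [obj, obj, e1, e2, e3]
  ring_nf
  linarith

/-- If the KKT condition holds at a feasible point, it is optimal. -/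
lemma opt_of_kkt {l : ℕ} (y : Fin l → ℝ) (K : Matrix (Fin l) (Fin l) ℝ)
    (hK : K.PosSemidef) (C : ℝ) (α : Fin l → ℝ) (hα : α ∈ feas y C)
    (h : ∀ p ∈ Iup y C α, ∀ q ∈ Idown y C α, grad y K α p ≤ grad y K α q) :
    α ∈ opt y K C := by
  refine ⟨hα, ?_⟩
  have hub : ∀ z ∈ obj y K '' feas y C, z ≤ obj y K α := by
    rintro z ⟨β, hβ, rfl⟩
    have hlin := obj_le_linearization y K hK α β
    have hsum : ∑ i, (β - α) i = 0 := by
      have h' : ∑ i, (β - α) i = (∑ i, β i) - ∑ i, α i := by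
        simp [Finset.sum_sub_distrib]
      rw [h', hβ.1, hα.1]; ring
    suffices hd : grad y K α ⬝ᵥ (β - α) ≤ 0 by linarith
    by_cases hne : ∃ i, α i < ub y C i
    · obtain ⟨i0, hi0⟩ := hne
      set s : Finset (Fin l) := Finset.univ.filter (fun i => α i < ub y C i) with hs
      have hsne : s.Nonempty := ⟨i0, by simp [hs, hi0]⟩
      set b : ℝ := s.sup' hsne (grad y K α) with hb
      have hup : ∀ i ∈ Iup y C α, grad y K α i ≤ b :=
        fun i hi => Finset.le_sup' _ (by simp [hs]; exact hi)
      have hdown : ∀ q ∈ Idown y C α, b ≤ grad y K α q := by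
        intro q hq
        apply Finset.sup'_le
        intro p hp
        exact h p (by simpa [hs, Iup] using hp) q hq
      have key : ∀ i, grad y K α i * (β - α) i ≤ b * (β - α) i := by
        intro i
        rcases lt_trichotomy ((β - α) i) 0 with hlt | heq | hgt
        · have hiq : i ∈ Idown y C α := by
            have hba : β i < α i := by
              have := hlt; simp only [Pi.sub_apply, sub_neg] at this; exact this
            exact lt_of_le_of_lt (hβ.2 i).1 hba
          have := hdown i hiq
          nlinarith
        · rw [heq]; simp
        · have hiq : i ∈ Iup y C α := by
            have hba : α i < β i := by
              have := hgt; simp only [Pi.sub_apply, sub_pos] at this; exact this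
            exact lt_of_lt_of_le hba (hβ.2 i).2
          have := hup i hiq
          nlinarith
      calc grad y K α ⬝ᵥ (β - α) = ∑ i, grad y K α i * (β - α) i := rfl
        _ ≤ ∑ i, b * (β - α) i := Finset.sum_le_sum (fun i _ => key i)
        _ = b * ∑ i, (β - α) i := by rw [Finset.mul_sum]
        _ = 0 := by rw [hsum]; ring
    · push_neg at hne
      have hzero : (β - α) = 0 := by
        funext i
        have hnp : ∀ i ∈ Finset.univ, (β - α) i ≤ 0 := by
          intro i _
          have : β i ≤ α i := le_trans (hβ.2 i).2 (hne i)
          simpa [Pi.sub_apply, sub_nonpos] using this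
        exact (Finset.sum_eq_zero_iff_of_nonpos hnp).1 hsum i (Finset.mem_univ i)
      rw [hzero]
      simp
  have hg : IsGreatest (obj y K '' feas y C) (obj y K α) :=
    ⟨⟨α, hα, rfl⟩, fun z hz => hub z hz⟩
  exact hg.csSup_eq.symm

/-- For a second-order working set selection `W` and every `α ∈ R \ R*`,
one has `v_{W(α)}ᵀ∇f(α) ≠ 0`; in particular, if `K v_{W(α)} = 0` then `g̃_W(α) = ∞`. -/
theorem wss_grad_ne_zero
    (hl : 2 ≤ l) (y : Fin l → ℝ) (hy : ∀ i, y i = 1 ∨ y i = -1)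
    (K : Matrix (Fin l) (Fin l) ℝ) (hK : K.PosSemidef) (C : ℝ) (hC : 0 < C)
    (W : (Fin l → ℝ) → Fin l × Fin l) (hW : IsSecondOrderWSS y K C W) :
    ∀ α ∈ feas y C \ opt y K C,
      dir (W α) ⬝ᵥ grad y K α ≠ 0 ∧
      (K *ᵥ dir (W α) = 0 → ngain y K (W α) α = ⊤) := by
  intro α hα
  obtain ⟨hαf, hαno⟩ := hα
  obtain ⟨hws, hmax1, hmax2⟩ := hW α ⟨hαf, hαno⟩
  have hviol : ∃ p ∈ Iup y C α, ∃ q ∈ Idown y C α, grad y K α q < grad y K α p := by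
    by_contra hcon
    push_neg at hcon
    exact hαno (opt_of_kkt y K hK C α hαf hcon)
  obtain ⟨p, hp, q, hq, hpq⟩ := hviol
  set i := (W α).1 with hi
  have hip : grad y K α p ≤ grad y K α i := hmax1 p hp
  have hqi : q ≠ i := by
    intro hqe
    rw [hqe] at hpq
    linarith
  have h1 : ngain y K (i, q) α ≤ ngain y K (W α) α := hmax2 q hq hqi
  have hdiq : dir (i, q) ⬝ᵥ grad y K α ≠ 0 := by
    rw [dir_dotProduct]
    intro h0
    simp only at h0
    linarith
  have h2 : 0 < ngain y K (i, q) α := by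
    by_cases hden : dir (i, q) ⬝ᵥ (K *ᵥ dir (i, q)) = 0
    · unfold ngain
      rw [if_pos hden, if_neg hdiq]
      exact ENNReal.zero_lt_top
    · unfold ngain
      rw [if_neg hden]
      apply ENNReal.ofReal_pos.2
      have hden' : 0 < dir (i, q) ⬝ᵥ (K *ᵥ dir (i, q)) :=
        lt_of_le_of_ne (hK.dotProduct_mulVec_nonneg _) (Ne.symm hden)
      have hnum' : 0 < (dir (i, q) ⬝ᵥ grad y K α) ^ 2 :=
        lt_of_le_of_ne (sq_nonneg _) (Ne.symm (pow_ne_zero 2 hdiq))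
      exact div_pos hnum' (by linarith)
  have hpos : 0 < ngain y K (W α) α := lt_of_lt_of_le h2 h1
  have hmain : dir (W α) ⬝ᵥ grad y K α ≠ 0 := by
    intro h0
    have hz : ngain y K (W α) α = 0 := by
      by_cases hden : dir (W α) ⬝ᵥ (K *ᵥ dir (W α)) = 0
      · unfold ngain
        rw [if_pos hden, if_pos h0]
      · unfold ngain
        rw [if_neg hden, h0]
        simp
    rw [hz] at hpos
    exact lt_irrefl _ hpos
  refine ⟨hmain, fun hker => ?_⟩
  have hden : dir (W α) ⬝ᵥ (K *ᵥ dir (W α)) = 0 := by rw [hker]; simp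
  unfold ngain
  rw [if_pos hden, if_neg hmain]


end

end SMO
end

section
/- Let α ∈ ℝ^ℓ, let B be a working set with Q := v_BᵀKv_B > 0 and l := v_Bᵀ∇f(α) ≠ 0, set μ* = l/Q and g̃* = l²/(2Q), and let η ∈ (0,1). Then for every μ ∈ ℝ with 1 − η ≤ μ/μ* ≤ 1 + η one has f(α + μ v_B) − f(α) ≥ (1 − η²) · g̃* > 0. -/
open Matrix Filter Topology ENNReal

namespace SMO

noncomputable section

variable {l : ℕ}

lemma obj_step (y : Fin l → ℝ) (K : Matrix (Fin l) (Fin l) ℝ) (hsym : Kᵀ = K)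
    (α v : Fin l → ℝ) (μ : ℝ) :
    obj y K (α + μ • v) - obj y K α
      = μ * (v ⬝ᵥ grad y K α) - μ ^ 2 / 2 * (v ⬝ᵥ (K *ᵥ v)) := by
  have hswap : α ⬝ᵥ (K *ᵥ v) = v ⬝ᵥ (K *ᵥ α) := by
    rw [Matrix.dotProduct_mulVec, ← Matrix.mulVec_transpose, hsym, dotProduct_comm]
  simp only [obj, grad, Matrix.mulVec_add, Matrix.mulVec_smul, dotProduct_add,
    add_dotProduct, dotProduct_smul, smul_dotProduct, smul_eq_mul, Pi.sub_apply,
    dotProduct_sub, sub_dotProduct]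
  rw [hswap, dotProduct_comm y v]
  ring

/-- With `Q = v_BᵀKv_B > 0`, `l = v_Bᵀ∇f(α) ≠ 0`, `μ* = l/Q`,
`g̃* = l²/(2Q)` and `η ∈ (0,1)`: every `μ` with `1 − η ≤ μ/μ* ≤ 1 + η` satisfies
`f(α + μ v_B) − f(α) ≥ (1 − η²) · g̃* > 0`. -/
theorem step_gain_near_newton
    (hl : 2 ≤ l) (y : Fin l → ℝ) (hy : ∀ i, y i = 1 ∨ y i = -1)
    (K : Matrix (Fin l) (Fin l) ℝ) (hK : K.PosSemidef)
    (α : Fin l → ℝ) (B : Fin l × Fin l) (hB : B.1 ≠ B.2)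
    (Q lv μstar gstar : ℝ)
    (hQ : Q = dir B ⬝ᵥ (K *ᵥ dir B)) (hQpos : 0 < Q)
    (hlv : lv = dir B ⬝ᵥ grad y K α) (hlvne : lv ≠ 0)
    (hμstar : μstar = lv / Q) (hgstar : gstar = lv ^ 2 / (2 * Q))
    (η : ℝ) (hη : η ∈ Set.Ioo (0 : ℝ) 1) :
    ∀ μ : ℝ, 1 - η ≤ μ / μstar → μ / μstar ≤ 1 + η →
      (1 - η ^ 2) * gstar ≤ obj y K (α + μ • dir B) - obj y K α ∧
      0 < (1 - η ^ 2) * gstar := by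
  obtain ⟨hη0, hη1⟩ := hη
  have hQ0 : Q ≠ 0 := ne_of_gt hQpos
  have hμs : μstar ≠ 0 := by
    rw [hμstar]; exact div_ne_zero hlvne hQ0
  have hlv2 : 0 < lv ^ 2 := by positivity
  have hgpos : 0 < gstar := by rw [hgstar]; positivity
  have hpos : 0 < (1 - η ^ 2) * gstar := mul_pos (by nlinarith) hgpos
  intro μ h1 h2
  refine ⟨?_, hpos⟩
  have hstep := obj_step y K hK.isHermitian α (dir B) μ
  rw [hstep, ← hlv, ← hQ]
  set t : ℝ := μ / μstar with ht
  have hμ : μ = t * (lv / Q) := by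
    rw [ht, hμstar]; field_simp
  rw [hμ, hgstar]
  have h3 : (1 - t) ^ 2 ≤ η ^ 2 := by nlinarith
  have : t * (lv / Q) * lv - (t * (lv / Q)) ^ 2 / 2 * Q - (1 - η ^ 2) * (lv ^ 2 / (2 * Q))
      = (η ^ 2 - (1 - t) ^ 2) * (lv ^ 2 / (2 * Q)) := by
    field_simp; ring
  nlinarith [div_pos hlv2 (by linarith : (0:ℝ) < 2 * Q)]

end

end SMO
end

section
/- Let α ∈ ℝ^ℓ and let B₁, B₂ be working sets with Q₂₂ := v_{B₂}ᵀKv_{B₂} > 0. Set w₁ = v_{B₁}ᵀ∇f(α), w₂ = v_{B₂}ᵀ∇f(α), Q₁₁ = v_{B₁}ᵀKv_{B₁}, Q₁₂ = v_{B₁}ᵀKv_{B₂}, and let Q be the 2×2 matrix with rows (Q₁₁, Q₁₂) and (Q₁₂, Q₂₂). For any μ₁ ∈ ℝ define the follow-up Newton step μ₂ = (w₂ − Q₁₂ μ₁)/Q₂₂. Then the two-step gain satisfies f(α + μ₁ v_{B₁} + μ₂ v_{B₂}) − f(α) = −(det(Q)/(2Q₂₂)) μ₁² + ((Q₂₂ w₁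 − Q₁₂ w₂)/Q₂₂) μ₁ + w₂²/(2Q₂₂). -/
open Matrix Filter Topology ENNReal

namespace SMO

noncomputable section

variable {l : ℕ}

lemma symm_dot {l : ℕ} (K : Matrix (Fin l) (Fin l) ℝ) (hK : K.PosSemidef)
    (u v : Fin l → ℝ) : u ⬝ᵥ (K *ᵥ v) = v ⬝ᵥ (K *ᵥ u) := by
  have hs : Kᵀ = K := by
    have h := hK.isHermitian
    simpa [Matrix.IsHermitian, Matrix.conjTranspose_eq_transpose_of_trivial] using h
  rw [Matrix.dotProduct_mulVec, ← Matrix.mulVec_transpose, hs, dotProduct_comm]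

lemma obj_expand {l : ℕ} (y : Fin l → ℝ) (K : Matrix (Fin l) (Fin l) ℝ)
    (hK : K.PosSemidef) (α u v : Fin l → ℝ) (a b : ℝ) :
    obj y K (α + a • u + b • v) - obj y K α =
      a * (u ⬝ᵥ grad y K α) + b * (v ⬝ᵥ grad y K α) -
        (1 / 2) * (a ^ 2 * (u ⬝ᵥ (K *ᵥ u)) + 2 * a * b * (u ⬝ᵥ (K *ᵥ v)) +
          b ^ 2 * (v ⬝ᵥ (K *ᵥ v))) := by
  have hau := symm_dot K hK α u
  have hav := symm_dot K hK α v
  have huv := symm_dot K hK u v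
  simp only [obj, grad, Matrix.mulVec_add, Matrix.mulVec_smul, dotProduct_add,
    add_dotProduct, dotProduct_smul, smul_dotProduct, smul_eq_mul,
    dotProduct_sub, Pi.sub_apply]
  rw [hau, hav, huv, dotProduct_comm u y, dotProduct_comm v y]
  ring

/-- With `Q₂₂ > 0` and the `2×2` matrix `Q` with rows `(Q₁₁, Q₁₂)` and
`(Q₁₂, Q₂₂)`, for any `μ₁` and follow-up Newton step `μ₂ = (w₂ − Q₁₂μ₁)/Q₂₂`, the
two-step gain equals
`−(det(Q)/(2Q₂₂))μ₁² + ((Q₂₂w₁ − Q₁₂w₂)/Q₂₂)μ₁ + w₂²/(2Q₂₂)`. -/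
theorem two_step_gain_formula
    (hl : 2 ≤ l) (y : Fin l → ℝ) (hy : ∀ i, y i = 1 ∨ y i = -1)
    (K : Matrix (Fin l) (Fin l) ℝ) (hK : K.PosSemidef)
    (α : Fin l → ℝ) (B₁ B₂ : Fin l × Fin l) (hB₁ : B₁.1 ≠ B₁.2) (hB₂ : B₂.1 ≠ B₂.2)
    (w₁ w₂ Q₁₁ Q₁₂ Q₂₂ : ℝ)
    (hw₁ : w₁ = dir B₁ ⬝ᵥ grad y K α)
    (hw₂ : w₂ = dir B₂ ⬝ᵥ grad y K α)
    (hQ₁₁ : Q₁₁ = dir B₁ ⬝ᵥ (K *ᵥ dir B₁))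
    (hQ₁₂ : Q₁₂ = dir B₁ ⬝ᵥ (K *ᵥ dir B₂))
    (hQ₂₂ : Q₂₂ = dir B₂ ⬝ᵥ (K *ᵥ dir B₂)) (hQ₂₂pos : 0 < Q₂₂) :
    ∀ μ₁ : ℝ,
      obj y K (α + μ₁ • dir B₁ + ((w₂ - Q₁₂ * μ₁) / Q₂₂) • dir B₂) - obj y K α =
        -((!![Q₁₁, Q₁₂; Q₁₂, Q₂₂] : Matrix (Fin 2) (Fin 2) ℝ).det / (2 * Q₂₂)) * μ₁ ^ 2 +
          ((Q₂₂ * w₁ - Q₁₂ * w₂) / Q₂₂) * μ₁ + w₂ ^ 2 / (2 * Q₂₂) := by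
  intro μ₁
  have h := obj_expand y K hK α (dir B₁) (dir B₂) μ₁ ((w₂ - Q₁₂ * μ₁) / Q₂₂)
  rw [h, ← hw₁, ← hw₂, ← hQ₁₁, ← hQ₁₂, ← hQ₂₂, Matrix.det_fin_two_of]
  field_simp
  ring

end

end SMO
end

section
/- Let α ∈ ℝ^ℓ and let B₁, B₂ be working sets with Q₁₁ := v_{B₁}ᵀKv_{B₁} > 0 and Q₂₂ := v_{B₂}ᵀKv_{B₂} > 0. Set w₁ = v_{B₁}ᵀ∇f(α), w₂ = v_{B₂}ᵀ∇f(α), Q₁₂ = v_{B₁}ᵀKv_{B₂}, and let Q be the 2×2 matrix with rows (Q₁₁, Q₁₂) and (Q₁₂, Q₂₂); assume det(Q) > 0. With the planning-ahead step size μ₁ = (Q₂₂ w₁ − Q₁₂ w₂)/det(Q) and the follow-up Newton step μ₂ = (w₂ − Q₁₂ μ₁)/Q₂₂, the double-step gain is lower bounded by the single Newton step gain: f(α + μ₁ v_{B₁} + μ₂ v_{B₂}) − f(α) ≥ w₁²/(2Q₁₁). -/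
open Matrix Filter Topology ENNReal

namespace SMO

noncomputable section

variable {l : ℕ}

/-- With `Q₁₁, Q₂₂ > 0` and `det(Q) > 0`, the planning-ahead step
`μ₁ = (Q₂₂w₁ − Q₁₂w₂)/det(Q)` followed by the Newton step `μ₂ = (w₂ − Q₁₂μ₁)/Q₂₂` has
double-step gain lower bounded by the single Newton step gain `w₁²/(2Q₁₁)`. -/
theorem planning_ahead_gain_bound
    (hl : 2 ≤ l) (y : Fin l → ℝ) (hy : ∀ i, y i = 1 ∨ y i = -1)
    (K : Matrix (Fin l) (Fin l) ℝ) (hK : K.PosSemidef)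
    (α : Fin l → ℝ) (B₁ B₂ : Fin l × Fin l) (hB₁ : B₁.1 ≠ B₁.2) (hB₂ : B₂.1 ≠ B₂.2)
    (w₁ w₂ Q₁₁ Q₁₂ Q₂₂ : ℝ)
    (hw₁ : w₁ = dir B₁ ⬝ᵥ grad y K α)
    (hw₂ : w₂ = dir B₂ ⬝ᵥ grad y K α)
    (hQ₁₁ : Q₁₁ = dir B₁ ⬝ᵥ (K *ᵥ dir B₁)) (hQ₁₁pos : 0 < Q₁₁)
    (hQ₁₂ : Q₁₂ = dir B₁ ⬝ᵥ (K *ᵥ dir B₂))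
    (hQ₂₂ : Q₂₂ = dir B₂ ⬝ᵥ (K *ᵥ dir B₂)) (hQ₂₂pos : 0 < Q₂₂)
    (hdet : 0 < (!![Q₁₁, Q₁₂; Q₁₂, Q₂₂] : Matrix (Fin 2) (Fin 2) ℝ).det)
    (μ₁ μ₂ : ℝ)
    (hμ₁ : μ₁ = (Q₂₂ * w₁ - Q₁₂ * w₂) / (!![Q₁₁, Q₁₂; Q₁₂, Q₂₂] : Matrix (Fin 2) (Fin 2) ℝ).det)
    (hμ₂ : μ₂ = (w₂ - Q₁₂ * μ₁) / Q₂₂) :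
    w₁ ^ 2 / (2 * Q₁₁) ≤ obj y K (α + μ₁ • dir B₁ + μ₂ • dir B₂) - obj y K α := by
  have hsym : ∀ u v : Fin l → ℝ, u ⬝ᵥ (K *ᵥ v) = v ⬝ᵥ (K *ᵥ u) := fun u v => by
    rw [dotProduct_mulVec, ← mulVec_transpose, show Kᵀ = K by simpa [Matrix.IsSymm] using hK.1, dotProduct_comm]
  set v₁ := dir B₁ with hv₁
  set v₂ := dir B₂ with hv₂
  set d : Fin l → ℝ := μ₁ • v₁ + μ₂ • v₂ with hd
  have hgoal : α + μ₁ • v₁ + μ₂ • v₂ = α + d := by rw [hd]; abel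
  rw [hgoal]
  have hgain : obj y K (α + d) - obj y K α
      = d ⬝ᵥ grad y K α - (1 / 2) * (d ⬝ᵥ (K *ᵥ d)) := by
    simp only [obj, grad, mulVec_add, dotProduct_add, add_dotProduct, dotProduct_sub,
      Pi.sub_apply]
    rw [hsym d α, dotProduct_comm y d]
    ring
  have e1 : d ⬝ᵥ grad y K α = μ₁ * w₁ + μ₂ * w₂ := by
    simp [hd, add_dotProduct, smul_dotProduct, hw₁, hw₂, smul_eq_mul]
  have e2 : d ⬝ᵥ (K *ᵥ d) = μ₁ ^ 2 * Q₁₁ + 2 * μ₁ * μ₂ * Q₁₂ + μ₂ ^ 2 * Q₂₂ := by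
    simp only [hd, mulVec_add, mulVec_smul, add_dotProduct, smul_dotProduct,
      dotProduct_add, dotProduct_smul, smul_eq_mul]
    rw [hsym v₂ v₁]
    rw [hQ₁₁, hQ₁₂, hQ₂₂]
    ring
  rw [hgain, e1, e2]
  have hD : (!![Q₁₁, Q₁₂; Q₁₂, Q₂₂] : Matrix (Fin 2) (Fin 2) ℝ).det
      = Q₁₁ * Q₂₂ - Q₁₂ ^ 2 := by simp [Matrix.det_fin_two_of]; ring
  rw [hD] at hdet hμ₁
  have hμ₂' : μ₂ = (Q₁₁ * w₂ - Q₁₂ * w₁) / (Q₁₁ * Q₂₂ - Q₁₂ ^ 2) := by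
    rw [hμ₂, hμ₁]
    obtain ⟨D, hD⟩ : ∃ D, Q₁₁ * Q₂₂ - Q₁₂ ^ 2 = D := ⟨_, rfl⟩
    have hne : D ≠ 0 := hD ▸ hdet.ne'
    rw [hD]
    field_simp
    subst hD
    ring
  rw [hμ₁, hμ₂']
  rw [div_le_iff₀ (by positivity)]
  have key : ((Q₂₂ * w₁ - Q₁₂ * w₂) / (Q₁₁ * Q₂₂ - Q₁₂ ^ 2) * w₁ +
        (Q₁₁ * w₂ - Q₁₂ * w₁) / (Q₁₁ * Q₂₂ - Q₁₂ ^ 2) * w₂ -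
        1 / 2 * (((Q₂₂ * w₁ - Q₁₂ * w₂) / (Q₁₁ * Q₂₂ - Q₁₂ ^ 2)) ^ 2 * Q₁₁ +
          2 * ((Q₂₂ * w₁ - Q₁₂ * w₂) / (Q₁₁ * Q₂₂ - Q₁₂ ^ 2)) *
            ((Q₁₁ * w₂ - Q₁₂ * w₁) / (Q₁₁ * Q₂₂ - Q₁₂ ^ 2)) * Q₁₂ +
          ((Q₁₁ * w₂ - Q₁₂ * w₁) / (Q₁₁ * Q₂₂ - Q₁₂ ^ 2)) ^ 2 * Q₂₂))
      = (Q₂₂ * w₁ ^ 2 - 2 * Q₁₂ * w₁ * w₂ + Q₁₁ * w₂ ^ 2) / (2 * (Q₁₁ * Q₂₂ - Q₁₂ ^ 2)) := by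
    obtain ⟨D, hD⟩ : ∃ D, Q₁₁ * Q₂₂ - Q₁₂ ^ 2 = D := ⟨_, rfl⟩
    have hne : D ≠ 0 := hD ▸ hdet.ne'
    rw [hD]
    field_simp
    subst hD
    ring
  rw [key, div_mul_eq_mul_div, le_div_iff₀ (by positivity)]
  nlinarith [sq_nonneg (Q₁₂ * w₁ - Q₁₁ * w₂), hQ₁₁pos.le, hdet.le,
    mul_pos hQ₁₁pos hdet]

end

end SMO
end
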